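/- Monogenic plane waves: let m ≥ 2, let t, s ∈ ℝ^m be orthonormal vectors (|t| = |s| = 1, ⟨t,s⟩ = 0), and let k ∈ ℕ. Then the Clifford-algebra-valued polynomial map f(x) = (⟨x,t⟩·1 − ι(t)ι(s)·⟨x,s⟩)^k is monogenic, i.e. Σ_{j=1}^m ι(ε_j) · (∂_j f)(x) = 0 for all x ∈ ℝ^m, where ε_j is the standard basis of ℝ^m, ⟨x,t⟩ = Σ_j x_j t_j, and ∂_j f denotes the j-th partial derivative of the polynomial map f. -/

import Mathlib

open CliffordAlgebra

/-- The quadratic form `Q(x) = -(x₁² + ⋯ + x_m²)` on `ℝ^m`, whose Clifford algebra is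
the real Clifford algebra `Cl_m` with generators `e_j = ι(ε_j)` satisfying
`e_j e_k + e_k e_j = -2 δ_{jk}`. -/
noncomputable def negEuclidQ (m : ℕ) : QuadraticForm ℝ (Fin m → ℝ) :=
  QuadraticMap.weightedSumSquares ℝ (fun _ : Fin m => (-1 : ℝ))

/-- The monogenic plane wave `x ↦ (⟨x,t⟩·1 - ι(t)ι(s)·⟨x,s⟩)^k` with values in `Cl_m`. -/
noncomputable def planeWave (m k : ℕ) (t s : Fin m → ℝ) :
    (Fin m → ℝ) → CliffordAlgebra (negEuclidQ m) :=
  fun x => ((∑ j, x j * t j) • (1 : CliffordAlgebra (negEuclidQ m))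
      - (∑ j, x j * s j) • (ι (negEuclidQ m) t * ι (negEuclidQ m) s)) ^ k

/-- Derivative of `v ↦ φ ((A + v • B) ^ k)` at `0`, for commuting `A`, `B`. -/
lemma aux_hasDerivAt_phi_pow {m : ℕ} (A B : CliffordAlgebra (negEuclidQ m))
    (hAB : Commute B A) (φ : CliffordAlgebra (negEuclidQ m) →ₗ[ℝ] ℝ) (k : ℕ) :
    HasDerivAt (fun v : ℝ => φ ((A + v • B) ^ k)) (φ ((k : ℕ) • (B * A ^ (k - 1)))) 0 := by
  have hfun : ∀ v : ℝ, φ ((A + v • B) ^ k)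
      = ∑ i ∈ Finset.range (k + 1), v ^ i * φ (B ^ i * A ^ (k - i) * (k.choose i : _)) := by
    intro v
    have hc : Commute (v • B) A := hAB.smul_left v
    rw [add_comm A (v • B), hc.add_pow]
    rw [map_sum]
    refine Finset.sum_congr rfl fun i _ => ?_
    rw [smul_pow, smul_mul_assoc, smul_mul_assoc, map_smul, smul_eq_mul]
  have hd : HasDerivAt (fun v : ℝ => ∑ i ∈ Finset.range (k + 1),
      v ^ i * φ (B ^ i * A ^ (k - i) * (k.choose i : _)))
      (∑ i ∈ Finset.range (k + 1),
        ((i : ℝ) * (0 : ℝ) ^ (i - 1)) * φ (B ^ i * A ^ (k - i) * (k.choose i : _))) 0 :=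
    HasDerivAt.fun_sum fun i _ => (hasDerivAt_pow i 0).mul_const _
  have hval : (∑ i ∈ Finset.range (k + 1),
      ((i : ℝ) * (0 : ℝ) ^ (i - 1)) * φ (B ^ i * A ^ (k - i) * (k.choose i : _)))
      = φ ((k : ℕ) • (B * A ^ (k - 1))) := by
    rcases k with _ | n
    · simp
    · rw [Finset.sum_eq_single 1]
      · have h1 : ((n + 1 : ℕ)) • (B * A ^ n)
            = B * A ^ n * ((n + 1 : ℕ) : CliffordAlgebra (negEuclidQ m)) := by
          rw [nsmul_eq_mul, (Nat.cast_commute _ _).eq]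
        simp only [Nat.add_sub_cancel, h1, pow_one, Nat.choose_one_right, Nat.cast_one,
          pow_zero, one_mul, mul_one]
        norm_num
      · intro i _ hi1
        rcases i with _ | i
        · simp
        · have h0 : (0 : ℝ) ^ (i + 1 - 1) = 0 := by
            apply zero_pow; omega
          rw [h0, mul_zero, zero_mul]
      · intro h
        exact absurd (Finset.mem_range.mpr (by omega)) h
  have := hd.congr_of_eventuallyEq (Filter.Eventually.of_forall hfun)
  rwa [hval] at this

/-- Monogenic plane waves: for orthonormal vectors `t, s ∈ ℝ^m` the Clifford-algebra-valued
polynomial map `f(x) = (⟨x,t⟩·1 - ι(t)ι(s)·⟨x,s⟩)^k` is (left) monogenic.  The partial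
derivatives `g j = ∂_j f` are characterized through all `ℝ`-linear functionals `φ` on `Cl_m`
(which separate points), and the Dirac operator `∑_j ι(ε_j) ∂_j` annihilates `f`. -/
theorem planeWave_monogenic (m : ℕ) (hm : 2 ≤ m) (t s : Fin m → ℝ)
    (ht : ∑ j, t j ^ 2 = 1) (hs : ∑ j, s j ^ 2 = 1) (hts : ∑ j, t j * s j = 0) (k : ℕ) :
    ∃ g : Fin m → (Fin m → ℝ) → CliffordAlgebra (negEuclidQ m),
      (∀ (j : Fin m) (x : Fin m → ℝ) (φ : CliffordAlgebra (negEuclidQ m) →ₗ[ℝ] ℝ),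
        deriv (fun u : ℝ => φ (planeWave m k t s (Function.update x j u))) (x j)
          = φ (g j x)) ∧
      ∀ x : Fin m → ℝ,
        ∑ j, ι (negEuclidQ m) (Pi.single j 1) * g j x = 0 := by
  set Q := negEuclidQ m with hQ
  set T := ι Q t with hT
  set S := ι Q s with hS
  set W : CliffordAlgebra Q := T * S with hW
  set P : (Fin m → ℝ) → CliffordAlgebra Q :=
    fun x => (∑ j, x j * t j) • (1 : CliffordAlgebra Q) - (∑ j, x j * s j) • W with hP
  set B : Fin m → CliffordAlgebra Q :=
    fun j => t j • (1 : CliffordAlgebra Q) - s j • W with hB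
  have hcomm : ∀ (x : Fin m → ℝ) j, Commute (B j) (P x) := by
    intro x j
    show B j * P x = P x * B j
    simp only [hB, hP, sub_mul, mul_sub, smul_mul_assoc, mul_smul_comm, one_mul, mul_one]
    module
  refine ⟨fun j x => (k : ℕ) • (B j * (P x) ^ (k - 1)), ?_, ?_⟩
  · intro j x φ
    have hupd : ∀ u : ℝ, P (Function.update x j u) = P x + (u - x j) • B j := by
      intro u
      have h1 : ∀ w : Fin m → ℝ, (∑ i, (Function.update x j u) i * w i)
          = (∑ i, x i * w i) + (u - x j) * w j := by
        intro w
        have h2 : ∀ i, (Function.update x j u) i * w i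
            = x i * w i + (if i = j then (u - x j) * w j else 0) := by
          intro i
          rcases eq_or_ne i j with rfl | h
          · rw [Function.update_self, if_pos rfl]; ring
          · simp [Function.update_of_ne h, if_neg h]
        rw [Finset.sum_congr rfl fun i _ => h2 i, Finset.sum_add_distrib,
          Finset.sum_ite_eq' Finset.univ j (fun _ => (u - x j) * w j)]
        simp
      simp only [hP, h1, add_smul, smul_add]
      module
    have heq : (fun u : ℝ => φ (planeWave m k t s (Function.update x j u)))
        = fun u : ℝ => φ ((P x + (u - x j) • B j) ^ k) := by
      funext u
      have hpw : planeWave m k t s (Function.update x j u)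
          = (P (Function.update x j u)) ^ k := rfl
      rw [hpw, hupd]
    rw [heq]
    have hd := aux_hasDerivAt_phi_pow (P x) (B j) (hcomm x j) φ k
    have hd0 : HasDerivAt (fun v : ℝ => φ ((P x + v • B j) ^ k))
        (φ ((k : ℕ) • (B j * (P x) ^ (k - 1)))) (x j - x j) := by
      rwa [sub_self]
    have hsub : HasDerivAt (fun u : ℝ => u - x j) 1 (x j) :=
      (hasDerivAt_id (x j)).sub_const (x j)
    have hfull : HasDerivAt (fun u : ℝ => φ ((P x + (u - x j) • B j) ^ k))
        (φ ((k : ℕ) • (B j * (P x) ^ (k - 1)))) (x j) :=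
      HasDerivAt.comp_sub_const (x j) (x j) hd0
    rw [hfull.deriv]
  · intro x
    -- quadratic form values
    have hQt : Q t = -1 := by
      have h1 : Q t = ∑ j, ((-1 : ℝ) * (t j * t j)) := by
        simp [hQ, negEuclidQ, QuadraticMap.weightedSumSquares_apply, smul_eq_mul]
      rw [h1, Finset.sum_congr rfl fun j _ => (by ring : (-1 : ℝ) * (t j * t j) = -(t j ^ 2)),
        Finset.sum_neg_distrib, ht]
    have hQs : Q s = -1 := by
      have h1 : Q s = ∑ j, ((-1 : ℝ) * (s j * s j)) := by
        simp [hQ, negEuclidQ, QuadraticMap.weightedSumSquares_apply, smul_eq_mul]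
      rw [h1, Finset.sum_congr rfl fun j _ => (by ring : (-1 : ℝ) * (s j * s j) = -(s j ^ 2)),
        Finset.sum_neg_distrib, hs]
    have hQts : Q (t + s) = -2 := by
      have h1 : Q (t + s) = ∑ j, ((-1 : ℝ) * ((t j + s j) * (t j + s j))) := by
        simp [hQ, negEuclidQ, QuadraticMap.weightedSumSquares_apply, smul_eq_mul]
      have h2 : ∀ j, (-1 : ℝ) * ((t j + s j) * (t j + s j))
          = -(t j ^ 2) + -(s j ^ 2) + (-2) * (t j * s j) := fun j => by ring
      rw [h1, Finset.sum_congr rfl fun j _ => h2 j, Finset.sum_add_distrib,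
        Finset.sum_add_distrib, Finset.sum_neg_distrib, Finset.sum_neg_distrib,
        ← Finset.mul_sum, ht, hs, hts]
      ring
    have hpolar : QuadraticMap.polar Q t s = 0 := by
      rw [QuadraticMap.polar, hQts, hQt, hQs]; ring
    have hanti : T * S + S * T = 0 := by
      rw [hT, hS, ι_mul_ι_add_swap, hpolar, map_zero]
    have hSS : S * S = algebraMap ℝ (CliffordAlgebra Q) (-1) := by
      rw [hS, ι_sq_scalar, hQs]
    have hSTS : S * T * S = T := by
      have hTS : T * S = -(S * T) := by
        rw [eq_neg_iff_add_eq_zero]; exact hanti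
      calc S * T * S = S * (T * S) := by rw [mul_assoc]
        _ = -(S * S * T) := by rw [hTS, mul_neg, mul_assoc]
        _ = -((-1 : ℝ) • T) := by rw [hSS, Algebra.smul_def]
        _ = T := by rw [neg_smul, one_smul, neg_neg]
    have key : (∑ j, ι Q (Pi.single j 1) * B j) = 0 := by
      have h1 : ∀ j : Fin m, ι Q (Pi.single j 1) * B j
          = t j • ι Q (Pi.single j 1) - (s j • ι Q (Pi.single j 1)) * W := by
        intro j
        simp only [hB, mul_sub, mul_smul_comm, mul_one, smul_mul_assoc]
      have hsum : ∀ w : Fin m → ℝ, (∑ j, w j • ι Q (Pi.single j 1)) = ι Q w := by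
        intro w
        have h2 : ∀ j : Fin m, w j • ι Q (Pi.single j 1) = ι Q (Pi.single j (w j)) := by
          intro j
          rw [← map_smul]
          congr 1
          funext i
          simp [Pi.single_apply]
        rw [Finset.sum_congr rfl fun j _ => h2 j, ← map_sum]
        congr 1
        exact Finset.univ_sum_single w
      rw [Finset.sum_congr rfl fun j _ => h1 j, Finset.sum_sub_distrib, ← Finset.sum_mul,
        hsum t, hsum s, ← hT, ← hS, hW, ← mul_assoc, hSTS, sub_self]
    calc (∑ j, ι Q (Pi.single j 1) * ((k : ℕ) • (B j * (P x) ^ (k - 1))))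
        = ∑ j, (k : ℕ) • (ι Q (Pi.single j 1) * B j * (P x) ^ (k - 1)) := by
          refine Finset.sum_congr rfl fun j _ => ?_
          rw [mul_smul_comm, mul_assoc]
      _ = (k : ℕ) • ((∑ j, ι Q (Pi.single j 1) * B j) * (P x) ^ (k - 1)) := by
          rw [← Finset.smul_sum, Finset.sum_mul]
      _ = 0 := by rw [key, zero_mul, smul_zero]
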